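/- Let M be a local Moufang set with fixed non-equivalent points 0 and ∞, and let x be a point with x not equivalent to ∞, with α_x the unique element of U_∞ mapping 0 to x. Then the following are equivalent: (1) x is a unit (i.e. x is not equivalent to 0 and not equivalent to ∞); (2) the permutation induced by α_x on equivalence classes does not fix the class of 0; (3) the induced permutation of α_x does not fix any equivalence class other than the class of ∞. -/
import Mathlib


open Equiv

structure LocalMoufangSet (X : Type*) where
  r : X → X → Prop
  requiv : Equivalence r
  U : X → Subgroup (Equiv.Perm X)
  preserves : ∀ x : X, ∀ u ∈ U x, ∀ a b : X, r a b ↔ r (u a) (u b)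
  big : ∃ a b c : X, ¬ r a b ∧ ¬ r b c ∧ ¬ r a c
  lm1 : ∀ x y : X, r x y → ∀ u ∈ U x, ∃ v ∈ U y, ∀ z : X, r (u z) (v z)
  lm2_fix : ∀ x : X, ∀ u ∈ U x, u x = x
  lm2_trans : ∀ x y z : X, ¬ r y x → ¬ r z x → ∃! u : Equiv.Perm X, u ∈ U x ∧ u y = z
  lm2'_trans : ∀ x y z : X, ¬ r y x → ¬ r z x → ∃ u ∈ U x, r (u y) z
  lm2'_free : ∀ x : X, ∀ u ∈ U x, ∀ y : X, ¬ r y x → r (u y) y → ∀ z : X, r (u z) z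
  lm3 : ∀ x : X, ∀ g ∈ (⨆ y : X, U y : Subgroup (Equiv.Perm X)),
      (U x).map (MulAut.conj g).toMonoidHom = U (g x)

namespace LocalMoufangSet

variable {X : Type*} (M : LocalMoufangSet X)

/-- The little projective group. -/
def G : Subgroup (Equiv.Perm X) := ⨆ x : X, M.U x

/-- `x` is a unit with respect to the base points `o` (zero) and `ι` (infinity). -/
def IsUnitPt (o ι x : X) : Prop := ¬ M.r x o ∧ ¬ M.r x ι

/-- `μ` is the μ-map of `x`: it lies in the double coset `U_0 α_x U_0` and swaps `o` and `ι`.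
(We use the left-action convention: a right product `g α h` corresponds to `h * α * g`.) -/
def IsMuMap (o ι x : X) (μ : Equiv.Perm X) : Prop :=
  μ o = ι ∧ μ ι = o ∧
    ∃ a ∈ M.U ι, a o = x ∧ ∃ g ∈ M.U o, ∃ h ∈ M.U o, μ = h * a * g

/-- Specialness with respect to a μ-map `τ`: `(-x)τ = -(xτ)` for all units `x`. -/
def Special (o ι : X) (τ : Equiv.Perm X) : Prop :=
  ∀ z : X, IsUnitPt M o ι z → ∀ a ∈ M.U ι, a o = z → ∀ b ∈ M.U ι, b o = τ z →
    τ (a⁻¹ o) = b⁻¹ o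

end LocalMoufangSet


/-- characterizations of units. -/
theorem stmt2 {X : Type*} (M : LocalMoufangSet X) (o ι : X) (h0 : ¬ M.r o ι)
    (x : X) (hx : ¬ M.r x ι)
    (α : Equiv.Perm X) (hαU : α ∈ M.U ι) (hαo : α o = x) :
    (M.IsUnitPt o ι x ↔ ¬ M.r (α o) o) ∧
    (M.IsUnitPt o ι x ↔ ∀ z : X, ¬ M.r z ι → ¬ M.r (α z) z) := by
  constructor
  · rw [hαo]
    exact ⟨fun h => h.1, fun h => ⟨h, hx⟩⟩
  · constructor
    · rintro ⟨hxo, -⟩ z hz hconc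
      exact hxo (hαo ▸ M.lm2'_free ι α hαU z hz hconc o)
    · intro h
      exact ⟨hαo ▸ h o h0, hx⟩
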